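/- Let D = {d_1, ..., d_M} be a set of M real antenna positions and a(θ) ∈ ℂ^M the steering vector with m-th entry exp(iπ d_m sin θ). For angles θ_k, θ_i, θ_j, letting ⊗ denote the Kronecker product and x* the entrywise complex conjugate of x, one has |(a(θ_k)* ⊗ a(θ_k))^H (a(θ_j)* ⊗ a(θ_i))|² / (‖a(θ_k)* ⊗ a(θ_k)‖² ‖a(θ_j)* ⊗ a(θ_i)‖²) = G(Δ_ki; D) · G(−Δ_kj; D), where Δ_ki = sin θ_k − sin θ_i and Δ_kj = sin θ_k − sin θ_j; i.e., the Type II inter-user-interference beam pattern of the virtual array factors as the product of two physical beam patterns. -/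

import Mathlib

open Finset

/-- Steering vector: `m`-th entry `exp(i π d_m sin θ)`. -/
noncomputable def steer (M : ℕ) (d : Fin M → ℝ) (θ : ℝ) : Fin M → ℂ :=
  fun m => Complex.exp (Complex.I * Real.pi * (d m) * Real.sin θ)

/-- Kronecker product of two `M`-vectors, indexed by pairs. -/
def kron {M : ℕ} (x y : Fin M → ℂ) : Fin M × Fin M → ℂ :=
  fun p => x p.1 * y p.2

/-- Beam pattern `G(Δ; D) = (1/M²) |Σ_m exp(iπ d_m Δ)|²`. -/
noncomputable def G (M : ℕ) (d : Fin M → ℝ) (Δ : ℝ) : ℝ :=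
  (1 / (M : ℝ) ^ 2) * (norm (∑ m, Complex.exp (Complex.I * Real.pi * (d m) * Δ))) ^ 2

/-- the Type II IUI beam pattern of the virtual array factors as
`G(Δ_ki; D) · G(−Δ_kj; D)`. -/
theorem typeII_IUI_beam_pattern_factors (M : ℕ) (hM : 0 < M) (d : Fin M → ℝ)
    (θk θi θj : ℝ) :
    (norm (∑ p : Fin M × Fin M,
        (starRingEnd ℂ) (kron (fun m => (starRingEnd ℂ) (steer M d θk m)) (steer M d θk) p) *
          kron (fun m => (starRingEnd ℂ) (steer M d θj m)) (steer M d θi) p)) ^ 2 /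
      ((∑ p : Fin M × Fin M,
          norm (kron (fun m => (starRingEnd ℂ) (steer M d θk m)) (steer M d θk) p) ^ 2) *
        (∑ p : Fin M × Fin M,
          norm (kron (fun m => (starRingEnd ℂ) (steer M d θj m)) (steer M d θi) p) ^ 2)) =
    G M d (Real.sin θk - Real.sin θi) * G M d (-(Real.sin θk - Real.sin θj)) := by
  set sk := Real.sin θk
  set si := Real.sin θi
  set sj := Real.sin θj
  have hconj : ∀ (a x : ℝ),
      (starRingEnd ℂ) (Complex.exp (Complex.I * Real.pi * a * x))
        = Complex.exp (Complex.I * Real.pi * a * ((-x : ℝ) : ℂ)) := by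
    intro a x
    rw [← Complex.exp_conj]
    congr 1
    simp only [map_mul, Complex.conj_I, Complex.conj_ofReal]
    push_cast
    ring
  have hkey : ∀ (a x y : ℝ),
      Complex.exp (Complex.I * Real.pi * a * x) * Complex.exp (Complex.I * Real.pi * a * y)
        = Complex.exp (Complex.I * Real.pi * a * ((x + y : ℝ) : ℂ)) := by
    intro a x y
    rw [← Complex.exp_add]; push_cast; ring_nf
  have habs : ∀ (a x : ℝ),
      norm (Complex.exp (Complex.I * Real.pi * a * x)) = 1 := by
    intro a x
    have : Complex.I * Real.pi * a * x = ((Real.pi * a * x : ℝ) : ℂ) * Complex.I := by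
      push_cast; ring
    rw [this, Complex.norm_exp_ofReal_mul_I]
  have hnegsum : ∀ (x : ℝ),
      norm (∑ m, Complex.exp (Complex.I * Real.pi * (d m) * ((-x : ℝ) : ℂ)))
        = norm (∑ m, Complex.exp (Complex.I * Real.pi * (d m) * (x : ℂ))) := by
    intro x
    have : (∑ m, Complex.exp (Complex.I * Real.pi * (d m) * ((-x : ℝ) : ℂ)))
        = (starRingEnd ℂ) (∑ m, Complex.exp (Complex.I * Real.pi * (d m) * (x : ℂ))) := by
      rw [map_sum]
      exact Finset.sum_congr rfl fun m _ => (hconj (d m) x).symm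
    rw [this, Complex.norm_conj]
  have hnum : (∑ p : Fin M × Fin M,
        (starRingEnd ℂ) (kron (fun m => (starRingEnd ℂ) (steer M d θk m)) (steer M d θk) p) *
          kron (fun m => (starRingEnd ℂ) (steer M d θj m)) (steer M d θi) p)
      = (∑ m, Complex.exp (Complex.I * Real.pi * (d m) * ((sk + -sj : ℝ) : ℂ)))
        * (∑ m, Complex.exp (Complex.I * Real.pi * (d m) * ((-sk + si : ℝ) : ℂ))) := by
    rw [Fintype.sum_prod_type, Finset.sum_mul_sum]
    refine Finset.sum_congr rfl fun a _ => Finset.sum_congr rfl fun b _ => ?_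
    simp only [kron, steer, map_mul, Complex.conj_conj, hconj]
    rw [← hkey, ← hkey]
    simp only [sk, si, sj]
    ring
  have hden : ∀ (θ θ' : ℝ),
      (∑ p : Fin M × Fin M,
        norm (kron (fun m => (starRingEnd ℂ) (steer M d θ m)) (steer M d θ') p) ^ 2)
      = (M : ℝ) ^ 2 := by
    intro θ θ'
    have h1 : ∀ p : Fin M × Fin M,
        norm (kron (fun m => (starRingEnd ℂ) (steer M d θ m)) (steer M d θ') p) ^ 2 = 1 := by
      intro p
      simp only [kron, steer, map_mul, norm_mul, Complex.norm_conj, habs]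
      norm_num
    rw [Finset.sum_congr rfl fun p _ => h1 p]
    simp [Finset.card_univ]
    ring
  rw [hnum, hden, hden, norm_mul, mul_pow, G, G]
  have e1 : ((sk + -sj : ℝ) : ℂ) = ((sk - sj : ℝ) : ℂ) := by push_cast; ring
  have e2 : ((-sk + si : ℝ) : ℂ) = ((-(sk - si) : ℝ) : ℂ) := by push_cast; ring
  rw [show (∑ m, Complex.exp (Complex.I * Real.pi * (d m) * ((sk + -sj : ℝ) : ℂ)))
      = (∑ m, Complex.exp (Complex.I * Real.pi * (d m) * ((sk - sj : ℝ) : ℂ))) from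
        Finset.sum_congr rfl fun m _ => by rw [e1],
     show (∑ m, Complex.exp (Complex.I * Real.pi * (d m) * ((-sk + si : ℝ) : ℂ)))
      = (∑ m, Complex.exp (Complex.I * Real.pi * (d m) * ((-(sk - si) : ℝ) : ℂ))) from
        Finset.sum_congr rfl fun m _ => by rw [e2],
     hnegsum (sk - si), ← hnegsum (sk - sj)]
  have hM' : (M : ℝ) ≠ 0 := Nat.cast_ne_zero.mpr hM.ne'
  field_simp
  have hc : ∀ y : ℝ, (∑ x, Complex.exp (Complex.I * Real.pi * (y : ℂ) * ((d x : ℝ) : ℂ)))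
      = ∑ x, Complex.exp (Complex.I * Real.pi * ((d x : ℝ) : ℂ) * (y : ℂ)) :=
    fun y => Finset.sum_congr rfl fun x _ => by ring_nf
  rw [hc, hc]
  ring
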